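/- For all integers n ≥ 1 and all k with 0 ≤ k ≤ n, P_{0,k,2n+1} = P_{0,n−k,2n+1}, and for all k with 0 ≤ k ≤ n−1, P_{1,k,2n+1} = P_{1,n−k−1,2n+1}. -/

import Mathlib

namespace DescentParity

/-- Number of descent positions i (1-indexed adjacent pairs) of a permutation of {1,…,m}
    whose first (larger) entry is even. Entries of `Fin m` represent values via `(·:ℕ)+1`. -/
def desBegE (m : ℕ) (σ : Equiv.Perm (Fin m)) : ℕ :=
  (Finset.univ.filter (fun p : Fin m × Fin m =>
    (p.2 : ℕ) = (p.1 : ℕ) + 1 ∧ σ p.2 < σ p.1 ∧ Even ((σ p.1 : ℕ) + 1))).card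

def desEndE (m : ℕ) (σ : Equiv.Perm (Fin m)) : ℕ :=
  (Finset.univ.filter (fun p : Fin m × Fin m =>
    (p.2 : ℕ) = (p.1 : ℕ) + 1 ∧ σ p.2 < σ p.1 ∧ Even ((σ p.2 : ℕ) + 1))).card

def desBegO (m : ℕ) (σ : Equiv.Perm (Fin m)) : ℕ :=
  (Finset.univ.filter (fun p : Fin m × Fin m =>
    (p.2 : ℕ) = (p.1 : ℕ) + 1 ∧ σ p.2 < σ p.1 ∧ Odd ((σ p.1 : ℕ) + 1))).card

def desEndO (m : ℕ) (σ : Equiv.Perm (Fin m)) : ℕ :=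
  (Finset.univ.filter (fun p : Fin m × Fin m =>
    (p.2 : ℕ) = (p.1 : ℕ) + 1 ∧ σ p.2 < σ p.1 ∧ Odd ((σ p.2 : ℕ) + 1))).card

/-- The first entry σ₁ of the permutation is even. -/
def firstEven (m : ℕ) (σ : Equiv.Perm (Fin m)) : Prop :=
  ∃ i : Fin m, (i : ℕ) = 0 ∧ Even ((σ i : ℕ) + 1)

def firstOdd (m : ℕ) (σ : Equiv.Perm (Fin m)) : Prop :=
  ∃ i : Fin m, (i : ℕ) = 0 ∧ Odd ((σ i : ℕ) + 1)

instance (m : ℕ) (σ : Equiv.Perm (Fin m)) : Decidable (firstEven m σ) := by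
  unfold firstEven; infer_instance

instance (m : ℕ) (σ : Equiv.Perm (Fin m)) : Decidable (firstOdd m σ) := by
  unfold firstOdd; infer_instance

def R (k m : ℕ) : ℕ :=
  (Finset.univ.filter (fun σ : Equiv.Perm (Fin m) => desBegE m σ = k)).card

def M (k m : ℕ) : ℕ :=
  (Finset.univ.filter (fun σ : Equiv.Perm (Fin m) => desBegO m σ = k)).card

def P0 (k m : ℕ) : ℕ :=
  (Finset.univ.filter (fun σ : Equiv.Perm (Fin m) => firstOdd m σ ∧ desEndE m σ = k)).card

def P1 (k m : ℕ) : ℕ :=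
  (Finset.univ.filter (fun σ : Equiv.Perm (Fin m) => firstEven m σ ∧ desEndE m σ = k)).card

def Q0 (k m : ℕ) : ℕ :=
  (Finset.univ.filter (fun σ : Equiv.Perm (Fin m) => firstEven m σ ∧ desEndO m σ = k)).card

def Q1 (k m : ℕ) : ℕ :=
  (Finset.univ.filter (fun σ : Equiv.Perm (Fin m) => firstOdd m σ ∧ desEndO m σ = k)).card


section Aux
open Finset

lemma parity_rev (n : ℕ) (v : Fin (2*n+1)) :
    Even ((v.rev : ℕ) + 1) ↔ Even ((v : ℕ) + 1) := by
  have hv := v.is_lt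
  rw [Fin.val_rev]
  simp only [Nat.even_iff]
  omega

lemma revPerm_mul (n : ℕ) (σ : Equiv.Perm (Fin (2*n+1))) :
    Fin.revPerm * (Fin.revPerm * σ) = σ := by
  ext i
  simp [Equiv.Perm.mul_apply, Fin.rev_rev]

lemma odds_count (n : ℕ) (hn : 1 ≤ n) :
    (univ.filter (fun v : Fin (2*n+1) => Even ((v : ℕ) + 1))).card = n := by
  have key : (univ : Finset (Fin n)).card
      = (univ.filter (fun v : Fin (2*n+1) => Even ((v : ℕ) + 1))).card := by
    refine card_nbij' (fun a : Fin n => (⟨2*(a:ℕ)+1, by omega⟩ : Fin (2*n+1)))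
      (fun v : Fin (2*n+1) => (⟨min ((v:ℕ)/2) (n-1), by omega⟩ : Fin n)) ?_ ?_ ?_ ?_
    · intro a _
      simp only [coe_filter, Set.mem_setOf_eq, mem_filter, mem_univ, true_and, Nat.even_iff]
      omega
    · intro v _; exact mem_univ _
    · intro a _
      have ha := a.is_lt
      apply Fin.ext
      show min ((2*(a:ℕ)+1)/2) (n-1) = (a:ℕ)
      omega
    · intro v hv
      simp only [coe_filter, Set.mem_setOf_eq, mem_filter, mem_univ, true_and, Nat.even_iff] at hv
      have hlt := v.is_lt
      apply Fin.ext
      show 2 * (min ((v:ℕ)/2) (n-1)) + 1 = (v:ℕ)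
      omega
  simpa using key.symm

lemma E_count (n : ℕ) (hn : 1 ≤ n) (σ : Equiv.Perm (Fin (2*n+1))) :
    (univ.filter (fun j : Fin (2*n+1) => Even ((σ j : ℕ) + 1))).card = n := by
  have key : (univ.filter (fun j : Fin (2*n+1) => Even ((σ j : ℕ) + 1))).card
      = (univ.filter (fun v : Fin (2*n+1) => Even ((v : ℕ) + 1))).card := by
    refine card_nbij' σ σ.symm ?_ ?_ ?_ ?_ <;> intro a ha <;> simp_all
  rw [key, odds_count n hn]

lemma S_count (n : ℕ) (hn : 1 ≤ n) (σ : Equiv.Perm (Fin (2*n+1))) :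
    (univ.filter (fun j : Fin (2*n+1) => (j : ℕ) ≠ 0 ∧ Even ((σ j : ℕ) + 1))).card
      = n - (if Even (((σ 0 : Fin (2*n+1)) : ℕ) + 1) then 1 else 0) := by
  classical
  have hsplit := card_filter_add_card_filter_not
    (s := univ.filter (fun j : Fin (2*n+1) => Even ((σ j : ℕ) + 1)))
    (p := fun j : Fin (2*n+1) => (j : ℕ) = 0)
  rw [E_count n hn σ] at hsplit
  have h1 : (univ.filter (fun j : Fin (2*n+1) => (j : ℕ) ≠ 0 ∧ Even ((σ j : ℕ) + 1)))
      = (univ.filter (fun j : Fin (2*n+1) => Even ((σ j : ℕ) + 1))).filter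
          (fun j : Fin (2*n+1) => ¬ ((j : ℕ) = 0)) := by
    rw [filter_filter]
    apply filter_congr
    intro j _
    simp only [and_comm]
  have h2 : ((univ.filter (fun j : Fin (2*n+1) => Even ((σ j : ℕ) + 1))).filter
      (fun j : Fin (2*n+1) => (j : ℕ) = 0)).card
      = if Even (((σ 0 : Fin (2*n+1)) : ℕ) + 1) then 1 else 0 := by
    by_cases h : Even (((σ 0 : Fin (2*n+1)) : ℕ) + 1)
    · rw [if_pos h]
      have hset : ((univ.filter (fun j : Fin (2*n+1) => Even ((σ j : ℕ) + 1))).filter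
          (fun j : Fin (2*n+1) => (j : ℕ) = 0)) = ({0} : Finset (Fin (2*n+1))) := by
        ext j
        simp only [filter_filter, mem_filter, mem_univ, true_and, mem_singleton]
        constructor
        · rintro ⟨-, h0⟩; exact Fin.ext h0
        · rintro rfl; exact ⟨h, rfl⟩
      rw [hset, card_singleton]
    · rw [if_neg h]
      have hset : ((univ.filter (fun j : Fin (2*n+1) => Even ((σ j : ℕ) + 1))).filter
          (fun j : Fin (2*n+1) => (j : ℕ) = 0)) = (∅ : Finset (Fin (2*n+1))) := by
        ext j
        simp only [filter_filter, mem_filter, mem_univ, true_and, notMem_empty, iff_false,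
          not_and]
        intro hE h0
        exact h ((Fin.ext h0 : j = 0) ▸ hE)
      rw [hset, card_empty]
  rw [h1]
  omega

lemma T_count (n : ℕ) (hn : 1 ≤ n) (σ : Equiv.Perm (Fin (2*n+1))) :
    (univ.filter (fun p : Fin (2*n+1) × Fin (2*n+1) =>
        (p.2 : ℕ) = (p.1 : ℕ) + 1 ∧ Even ((σ p.2 : ℕ) + 1))).card
      = n - (if Even (((σ 0 : Fin (2*n+1)) : ℕ) + 1) then 1 else 0) := by
  rw [← S_count n hn σ]
  refine card_bij' (fun p _ => p.2)
    (fun a ha => ((⟨(a : ℕ) - 1, by omega⟩ : Fin (2*n+1)), a)) ?_ ?_ ?_ ?_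
  · intro p hp
    simp only [mem_filter, mem_univ, true_and] at hp ⊢
    exact ⟨by omega, hp.2⟩
  · intro a ha
    simp only [mem_filter, mem_univ, true_and] at ha ⊢
    refine ⟨?_, ha.2⟩
    have : 1 ≤ (a : ℕ) := by omega
    show (a : ℕ) = ((⟨(a : ℕ) - 1, by omega⟩ : Fin (2*n+1)) : ℕ) + 1
    simp only [Fin.val_mk]
    omega
  · rintro ⟨p1, p2⟩ hp
    simp only [mem_filter, mem_univ, true_and] at hp
    have h1 := hp.1
    simp only [Prod.mk.injEq]
    refine ⟨Fin.ext ?_, trivial⟩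
    simp only [Fin.val_mk]
    omega
  · intro a ha
    rfl


lemma firstOdd_iff (n : ℕ) (σ : Equiv.Perm (Fin (2*n+1))) :
    firstOdd (2*n+1) σ ↔ ¬ Even (((σ 0 : Fin (2*n+1)) : ℕ) + 1) := by
  constructor
  · rintro ⟨i, hi0, hodd⟩
    have : i = 0 := Fin.ext hi0
    subst this
    exact Nat.not_even_iff_odd.mpr hodd
  · intro h
    exact ⟨0, rfl, Nat.not_even_iff_odd.mp h⟩

lemma firstEven_iff (n : ℕ) (σ : Equiv.Perm (Fin (2*n+1))) :
    firstEven (2*n+1) σ ↔ Even (((σ 0 : Fin (2*n+1)) : ℕ) + 1) := by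
  constructor
  · rintro ⟨i, hi0, hev⟩
    have : i = 0 := Fin.ext hi0
    subst this
    exact hev
  · intro h
    exact ⟨0, rfl, h⟩

lemma first_parity (n : ℕ) (σ : Equiv.Perm (Fin (2*n+1))) :
    Even ((((Fin.revPerm * σ : Equiv.Perm (Fin (2*n+1))) 0 : Fin (2*n+1)) : ℕ) + 1)
      ↔ Even (((σ 0 : Fin (2*n+1)) : ℕ) + 1) := by
  rw [show ((Fin.revPerm * σ : Equiv.Perm (Fin (2*n+1))) 0) = (σ 0).rev from rfl]
  exact parity_rev n (σ 0)
lemma key (n : ℕ) (hn : 1 ≤ n) (σ : Equiv.Perm (Fin (2*n+1))) :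
    desEndE (2*n+1) (Fin.revPerm * σ) + desEndE (2*n+1) σ
      = n - (if Even (((σ 0 : Fin (2*n+1)) : ℕ) + 1) then 1 else 0) := by
  classical
  unfold desEndE
  have h1 : (univ.filter (fun p : Fin (2*n+1) × Fin (2*n+1) =>
      (p.2:ℕ) = (p.1:ℕ)+1 ∧ ((Fin.revPerm * σ : Equiv.Perm (Fin (2*n+1)))) p.2 < ((Fin.revPerm * σ : Equiv.Perm (Fin (2*n+1)))) p.1 ∧
        Even (((((Fin.revPerm * σ : Equiv.Perm (Fin (2*n+1)))) p.2) : ℕ) + 1)))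
      = ((univ.filter (fun p : Fin (2*n+1) × Fin (2*n+1) =>
          (p.2:ℕ) = (p.1:ℕ)+1 ∧ Even ((σ p.2 : ℕ)+1))).filter
          (fun p => ¬ (σ p.2 < σ p.1))) := by
    rw [filter_filter]
    apply filter_congr
    intro p _
    simp only [Equiv.Perm.mul_apply, Fin.revPerm_apply]
    constructor
    · rintro ⟨ha, hlt, hev⟩
      rw [Fin.rev_lt_rev] at hlt
      exact ⟨⟨ha, (parity_rev n _).mp hev⟩, not_lt.mpr hlt.le⟩
    · rintro ⟨⟨ha, hev⟩, hnlt⟩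
      have hne : σ p.1 ≠ σ p.2 := by
        intro hEq
        have h12 := σ.injective hEq
        rw [h12] at ha
        omega
      have hlt : σ p.1 < σ p.2 := lt_of_le_of_ne (not_lt.mp hnlt) hne
      exact ⟨ha, Fin.rev_lt_rev.mpr hlt, (parity_rev n _).mpr hev⟩
  have h2 : (univ.filter (fun p : Fin (2*n+1) × Fin (2*n+1) =>
      (p.2:ℕ) = (p.1:ℕ)+1 ∧ σ p.2 < σ p.1 ∧ Even ((σ p.2 : ℕ)+1)))
      = ((univ.filter (fun p : Fin (2*n+1) × Fin (2*n+1) =>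
          (p.2:ℕ) = (p.1:ℕ)+1 ∧ Even ((σ p.2 : ℕ)+1))).filter
          (fun p => σ p.2 < σ p.1)) := by
    rw [filter_filter]
    apply filter_congr
    intro p _
    tauto
  rw [h1, h2, Nat.add_comm, card_filter_add_card_filter_not, T_count n hn σ]

end Aux

theorem stmt_8 (n : ℕ) (hn : 1 ≤ n) :
    (∀ k ≤ n, P0 k (2*n+1) = P0 (n-k) (2*n+1)) ∧
    (∀ k ≤ n-1, P1 k (2*n+1) = P1 (n-k-1) (2*n+1)) := by
  classical
  constructor
  · intro k hk
    unfold P0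
    refine Finset.card_bij' (fun σ _ => Fin.revPerm * σ) (fun σ _ => Fin.revPerm * σ)
      ?_ ?_ ?_ ?_
    · intro σ hσ
      simp only [Finset.mem_filter, Finset.mem_univ, true_and] at hσ ⊢
      obtain ⟨hodd, hdes⟩ := hσ
      have hO : ¬ Even (((σ 0 : Fin (2*n+1)) : ℕ) + 1) := (firstOdd_iff n σ).mp hodd
      have hsum := key n hn σ
      rw [if_neg hO] at hsum
      refine ⟨(firstOdd_iff n _).mpr ?_, by omega⟩
      intro h
      exact hO ((first_parity n σ).mp h)
    · intro τ hτ
      simp only [Finset.mem_filter, Finset.mem_univ, true_and] at hτ ⊢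
      obtain ⟨hodd, hdes⟩ := hτ
      have hO : ¬ Even (((τ 0 : Fin (2*n+1)) : ℕ) + 1) := (firstOdd_iff n τ).mp hodd
      have hsum := key n hn τ
      rw [if_neg hO] at hsum
      refine ⟨(firstOdd_iff n _).mpr ?_, by omega⟩
      intro h
      exact hO ((first_parity n τ).mp h)
    · intro σ _
      exact revPerm_mul n σ
    · intro σ _
      exact revPerm_mul n σ
  · intro k hk
    unfold P1
    refine Finset.card_bij' (fun σ _ => Fin.revPerm * σ) (fun σ _ => Fin.revPerm * σ)
      ?_ ?_ ?_ ?_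
    · intro σ hσ
      simp only [Finset.mem_filter, Finset.mem_univ, true_and] at hσ ⊢
      obtain ⟨hev, hdes⟩ := hσ
      have hE : Even (((σ 0 : Fin (2*n+1)) : ℕ) + 1) := (firstEven_iff n σ).mp hev
      have hsum := key n hn σ
      rw [if_pos hE] at hsum
      exact ⟨(firstEven_iff n _).mpr ((first_parity n σ).mpr hE), by omega⟩
    · intro τ hτ
      simp only [Finset.mem_filter, Finset.mem_univ, true_and] at hτ ⊢
      obtain ⟨hev, hdes⟩ := hτ
      have hE : Even (((τ 0 : Fin (2*n+1)) : ℕ) + 1) := (firstEven_iff n τ).mp hev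
      have hsum := key n hn τ
      rw [if_pos hE] at hsum
      exact ⟨(firstEven_iff n _).mpr ((first_parity n τ).mpr hE), by omega⟩
    · intro σ _
      exact revPerm_mul n σ
    · intro σ _
      exact revPerm_mul n σ


end DescentParity
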